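/- Let V be a 4-dimensional real vector space with a nondegenerate symmetric bilinear form g. Let X ∈ V*, let α, ψ be real numbers, let DX : V × V → ℝ be a bilinear form (the derivative datum ∇_j X_k of a conformal Killing covector) satisfying DX(j,k) + DX(k,j) = 2ψ·g(j,k) for all j,k ∈ V, and let Dβ ∈ V* (the gradient of a function β). Define the derivative datum DK_j(k,l) = α(DX(j,k)X(l) + X(k)DX(j,l)) + Dβ(j)g(k,l) of the tensor K = α X⊗X + β g. Then the conformal Killing identity holds: for all j,k,l ∈ V, DK_j(k,l) + DK_k(l,j) + DK_l(j,k) = η(j)g(k,l) + η(k)g(l,j) + η(l)g(j,k), where η = 2αψ·X + Dβ ∈ V*. -/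

import Mathlib

open LinearMap (BilinForm)

/-- Pointwise content of the Rani–Edgar–Barnes construction: if `X` is a (conformal Killing)
covector with derivative datum `DX` satisfying `DX(j,k) + DX(k,j) = 2ψ g(j,k)`, then the
tensor `K = α X⊗X + β g`, with derivative datum built by the Leibniz rule, satisfies the
conformal Killing identity with associated conformal vector `η = 2αψ X + Dβ`. -/
theorem conformal_killing_tensor_from_conformal_killing_vector
    {V : Type*} [AddCommGroup V] [Module ℝ V] [FiniteDimensional ℝ V]
    (hdim : Module.finrank ℝ V = 4)
    (g : BilinForm ℝ V) (hgsymm : g.IsSymm) (hg : g.Nondegenerate)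
    (X : Module.Dual ℝ V) (α ψ : ℝ)
    (DX : BilinForm ℝ V)
    (hDX : ∀ j k, DX j k + DX k j = 2 * ψ * g j k)
    (Dβ : Module.Dual ℝ V)
    (DK : V → V → V → ℝ)
    (hDK : ∀ j k l, DK j k l = α * (DX j k * X l + X k * DX j l) + Dβ j * g k l)
    (η : Module.Dual ℝ V) (hη : η = (2 * α * ψ) • X + Dβ) :
    ∀ j k l, DK j k l + DK k l j + DK l j k
      = η j * g k l + η k * g l j + η l * g j k := by
  intro j k l
  have h1 := hDX j k
  have h2 := hDX k l
  have h3 := hDX l j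
  have s1 : g j k = g k j := hgsymm.eq j k
  have s2 : g k l = g l k := hgsymm.eq k l
  have s3 : g l j = g j l := hgsymm.eq l j
  simp only [hDK, hη, LinearMap.add_apply, LinearMap.smul_apply, smul_eq_mul]
  linear_combination (α * X l) * h1 + (α * X j) * h2 + (α * X k) * h3
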